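/- Let S and Q be periodic sequences in ℝ, each with an m-point motif and a minimal period. Then there exist t ∈ ℝ and ε ∈ {1, −1} with Q = {ε·x + t : x ∈ S} (i.e., S and Q are isometric in ℝ) if and only if there exists s ∈ ZMod m such that D(Q) = σ_s(D(S)) or D(Q) = σ_s(ρ(D(S))). In other words, the distance list considered up to cyclic permutations and reversal (the smallest distance list SDL) is a complete invariant of periodic sequences up to isometry of ℝ. -/

import Mathlib

/-- A periodic sequence in `ℝ` with an `m`-point motif `p` and period `l`:
the set `{p i + l * j : i ∈ Fin m, j ∈ ℤ}` where `0 ≤ p 0 < p 1 < ⋯ < p (m-1) < l`. -/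
structure PSeq (m : ℕ) where
  m_pos : 0 < m
  l : ℝ
  l_pos : 0 < l
  p : Fin m → ℝ
  p_strict : StrictMono p
  p0_nonneg : 0 ≤ p ⟨0, m_pos⟩
  p_lt : ∀ i, p i < l

namespace PSeq

variable {m : ℕ}

/-- The set of points of the periodic sequence. -/
def pts (S : PSeq m) : Set ℝ := {x | ∃ (i : Fin m) (j : ℤ), x = S.p i + S.l * j}

/-- The period is minimal: the same set of points cannot be produced with a smaller period. -/
def IsMinimal (S : PSeq m) : Prop := ∀ (m' : ℕ) (T : PSeq m'), T.pts = S.pts → S.l ≤ T.l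

/-- The distance list `D` of the periodic sequence, indexed by `ZMod m`:
`D i = p (i+1) - p i` for `i < m - 1`, and `D (m-1) = (p 0 + l) - p (m-1)`. -/
noncomputable def D (S : PSeq m) : ZMod m → ℝ := fun i =>
  letI : NeZero m := ⟨S.m_pos.ne'⟩
  if h : i.val + 1 < m then S.p ⟨i.val + 1, h⟩ - S.p ⟨i.val, i.val_lt⟩
  else S.p ⟨0, S.m_pos⟩ + S.l - S.p ⟨i.val, i.val_lt⟩

/-- Enumeration of the points of `S` by `ℤ`. -/
noncomputable def enum (S : PSeq m) : ℤ → ℝ := fun n =>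
  S.p ⟨((n % (m : ℤ)).toNat), by
    have hm : (0:ℤ) < (m:ℤ) := by exact_mod_cast S.m_pos
    have h1 : 0 ≤ n % (m:ℤ) := Int.emod_nonneg n hm.ne'
    have h2 : n % (m:ℤ) < m := Int.emod_lt_of_pos n hm
    omega⟩ + S.l * ((n / (m:ℤ) : ℤ) : ℝ)

lemma enum_gap (S : PSeq m) (n : ℤ) :
    S.enum (n + 1) - S.enum n = S.D ((n : ZMod m)) := by
  haveI : NeZero m := ⟨S.m_pos.ne'⟩
  have hm : (0:ℤ) < (m:ℤ) := by exact_mod_cast S.m_pos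
  have h1 : 0 ≤ n % (m:ℤ) := Int.emod_nonneg n hm.ne'
  have h2 : n % (m:ℤ) < m := Int.emod_lt_of_pos n hm
  have hval : (((n : ZMod m)).val : ℤ) = n % (m:ℤ) := ZMod.val_intCast n
  have hval' : ((n : ZMod m)).val = (n % (m:ℤ)).toNat := by omega
  have hsum : n % (m:ℤ) + (m:ℤ) * (n / (m:ℤ)) = n := Int.emod_add_mul_ediv n m
  by_cases hc : ((n : ZMod m)).val + 1 < m
  · -- interior step
    have hlt : n % (m:ℤ) + 1 < (m:ℤ) := by omega
    have huniq : (n+1) / (m:ℤ) = n / (m:ℤ) ∧ (n+1) % (m:ℤ) = n % (m:ℤ) + 1 :=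
      (Int.ediv_emod_unique hm).2 ⟨by omega, by omega, by omega⟩
    simp only [D, dif_pos hc, enum, huniq.1, huniq.2]
    have hnat : (n % (m:ℤ) + 1).toNat = (n % (m:ℤ)).toNat + 1 := by omega
    have hfin1 : (⟨(n % (m:ℤ) + 1).toNat, by omega⟩ : Fin m)
        = ⟨((n : ZMod m)).val + 1, hc⟩ := by
      apply Fin.ext; simp [hnat, hval']
    have hfin2 : (⟨(n % (m:ℤ)).toNat, by omega⟩ : Fin m)
        = ⟨((n : ZMod m)).val, ZMod.val_lt _⟩ := by
      apply Fin.ext; simp [hval']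
    rw [hfin1, hfin2]
    ring
  · -- wrap-around step
    have heq : n % (m:ℤ) + 1 = (m:ℤ) := by omega
    have huniq : (n+1) / (m:ℤ) = n / (m:ℤ) + 1 ∧ (n+1) % (m:ℤ) = 0 :=
      (Int.ediv_emod_unique hm).2 ⟨by rw [zero_add, mul_add, mul_one]; omega, le_refl 0, by omega⟩
    simp only [D, dif_neg hc, enum, huniq.1, huniq.2]
    have hfin2 : (⟨(n % (m:ℤ)).toNat, by omega⟩ : Fin m)
        = ⟨((n : ZMod m)).val, ZMod.val_lt _⟩ := by
      apply Fin.ext; simp [hval']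
    rw [hfin2]
    push_cast
    ring

lemma D_pos (S : PSeq m) (i : ZMod m) : 0 < S.D i := by
  haveI : NeZero m := ⟨S.m_pos.ne'⟩
  unfold D
  split
  · next h =>
      have : (⟨i.val, i.val_lt⟩ : Fin m) < ⟨i.val + 1, h⟩ := by
        simp [Fin.lt_def]
      have := S.p_strict this
      linarith
  · have h1 := S.p_lt ⟨i.val, i.val_lt⟩
    have h2 := S.p0_nonneg
    linarith

lemma enum_strictMono (S : PSeq m) : StrictMono S.enum := by
  apply strictMono_int_of_lt_succ
  intro n
  have := S.enum_gap n
  have := S.D_pos ((n : ZMod m))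
  linarith

lemma range_enum (S : PSeq m) : Set.range S.enum = S.pts := by
  have hm : (0:ℤ) < (m:ℤ) := by exact_mod_cast S.m_pos
  ext x
  constructor
  · rintro ⟨n, rfl⟩
    exact ⟨_, n / (m:ℤ), rfl⟩
  · rintro ⟨i, j, rfl⟩
    refine ⟨(i : ℤ) + (m:ℤ) * j, ?_⟩
    have hi0 : (0:ℤ) ≤ (i:ℤ) := by exact_mod_cast Nat.zero_le _
    have hilt : (i:ℤ) < (m:ℤ) := by exact_mod_cast i.isLt
    have hmod : ((i : ℤ) + (m:ℤ) * j) % (m:ℤ) = (i:ℤ) := by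
      rw [Int.add_mul_emod_self_left, Int.emod_eq_of_lt hi0 hilt]
    have hdiv : ((i : ℤ) + (m:ℤ) * j) / (m:ℤ) = j := by
      rw [Int.add_mul_ediv_left _ _ hm.ne', Int.ediv_eq_zero_of_lt hi0 hilt, zero_add]
    unfold enum
    rw [hdiv]
    congr 1
    congr 1
    apply Fin.ext
    simp [hmod]

end PSeq

/-- The cyclic shift `σ_s` acting on vectors indexed by `ZMod n`: `(σ_s v) i = v (i + s)`. -/
def shiftVec {n : ℕ} (s : ZMod n) (v : ZMod n → ℝ) : ZMod n → ℝ := fun i => v (i + s)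

/-- The reversal `ρ`: `(ρ v) i = v (m - 1 - i)` (note `m - 1 = -1` in `ZMod m`). -/
def revVec {n : ℕ} (v : ZMod n → ℝ) : ZMod n → ℝ := fun i => v (-1 - i)

/-- Two functions on `ℤ` with the same value at `0` and the same increments agree. -/
lemma eq_of_gap_eq {f g : ℤ → ℝ} (h0 : f 0 = g 0)
    (h : ∀ n : ℤ, f (n + 1) - f n = g (n + 1) - g n) : ∀ n, f n = g n := by
  intro n
  induction n using Int.induction_on with
  | zero => exact h0
  | succ n ih => have := h n; linarith
  | pred n ih =>
      have h2 := h (-(n:ℤ) - 1)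
      have e1 : (-(n:ℤ) - 1) + 1 = -(n:ℤ) := by ring
      rw [e1] at h2
      linarith

/-- A strictly monotone surjection `ℤ → ℤ` is a translation. -/
lemma int_strictMono_surj {g : ℤ → ℤ} (hm : StrictMono g)
    (hs : Function.Surjective g) (n : ℤ) : g n = g 0 + n := by
  have step : ∀ a : ℤ, g (a + 1) = g a + 1 := by
    intro a
    have h1 : g a < g (a + 1) := hm (lt_add_one a)
    by_contra hne
    have h2 : g a + 1 < g (a + 1) := by omega
    obtain ⟨j, hj⟩ := hs (g a + 1)
    rcases le_or_gt j a with hja | hja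
    · have := hm.monotone hja; omega
    · have : a + 1 ≤ j := hja
      have := hm.monotone this; omega
  induction n using Int.induction_on with
  | zero => omega
  | succ n ih => have := step n; omega
  | pred n ih =>
      have h2 := step (-(n:ℤ) - 1)
      have e1 : (-(n:ℤ) - 1) + 1 = -(n:ℤ) := by ring
      rw [e1] at h2
      omega

/-- the distance list up to cyclic permutations and reversal (the smallest
distance list SDL) is a complete invariant of periodic sequences up to isometry of `ℝ`. -/
theorem distance_list_complete_up_to_isometry {m : ℕ} (S Q : PSeq m)
    (hS : S.IsMinimal) (hQ : Q.IsMinimal) :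
    (∃ (t ε : ℝ), (ε = 1 ∨ ε = -1) ∧ Q.pts = (fun x => ε * x + t) '' S.pts) ↔
    ∃ s : ZMod m, Q.D = shiftVec s S.D ∨ Q.D = shiftVec s (revVec S.D) := by
  haveI : NeZero m := ⟨S.m_pos.ne'⟩
  constructor
  · rintro ⟨t, ε, hε, hpts⟩
    -- choose the (possibly reflected) enumeration of S, an enumeration of Q.pts
    set fS : ℤ → ℝ := fun n => ε * (if ε = 1 then S.enum n else S.enum (-n)) + t with hfS
    have hfS_mono : StrictMono fS := by
      intro a b hab
      rcases hε with h1 | h1 <;> simp only [hfS, h1]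
      · simpa using S.enum_strictMono hab
      · simp only [if_neg (by norm_num : (-1:ℝ) ≠ 1)]
        have := S.enum_strictMono (show -b < -a by omega)
        nlinarith [this]
    have hfS_range : Set.range fS = Q.pts := by
      rw [hpts]
      ext x
      constructor
      · rintro ⟨n, rfl⟩
        rcases hε with h1 | h1 <;> simp only [hfS, h1]
        · exact ⟨S.enum n, by rw [← S.range_enum]; exact ⟨n, rfl⟩, by simp⟩
        · exact ⟨S.enum (-n), by rw [← S.range_enum]; exact ⟨-n, rfl⟩, by norm_num⟩
      · rintro ⟨y, hy, rfl⟩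
        rw [← S.range_enum] at hy
        obtain ⟨n, rfl⟩ := hy
        rcases hε with h1 | h1
        · exact ⟨n, by simp [hfS, h1]⟩
        · refine ⟨-n, ?_⟩
          simp [hfS, h1, if_neg (by norm_num : (-1:ℝ) ≠ 1)]
    -- index-matching between enum Q and fS
    have hex : ∀ n : ℤ, ∃ j : ℤ, Q.enum j = fS n := by
      intro n
      have : fS n ∈ Q.pts := hfS_range ▸ ⟨n, rfl⟩
      rw [← Q.range_enum] at this
      exact this
    choose g hg using hex
    have hg_mono : StrictMono g := by
      intro a b hab
      have : Q.enum (g a) < Q.enum (g b) := by rw [hg, hg]; exact hfS_mono hab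
      exact (Q.enum_strictMono.lt_iff_lt).1 this
    have hg_surj : Function.Surjective g := by
      intro j
      have : Q.enum j ∈ Set.range fS := by rw [hfS_range, ← Q.range_enum]; exact ⟨j, rfl⟩
      obtain ⟨n, hn⟩ := this
      exact ⟨n, Q.enum_strictMono.injective (by rw [hg, hn])⟩
    set k : ℤ := g 0 with hk
    have hgk : ∀ n, g n = k + n := fun n => int_strictMono_surj hg_mono hg_surj n
    have hQf : ∀ n : ℤ, Q.enum n = fS (n - k) := by
      intro n
      have := hg (n - k)
      rw [hgk] at this
      simpa [show k + (n - k) = n by ring] using this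
    refine ⟨((-k : ℤ) : ZMod m), ?_⟩
    rcases hε with h1 | h1
    · left
      funext i
      set n : ℤ := (i.val : ℤ) with hn
      have hni : ((n : ZMod m)) = i := by
        simp [hn, ZMod.natCast_val, ZMod.cast_id]
      have hq := Q.enum_gap n
      rw [hQf (n+1), hQf n] at hq
      have hs := S.enum_gap (n - k)
      simp only [hfS, h1, eq_self_iff_true, if_true, one_mul] at hq
      have e1 : n + 1 - k = (n - k) + 1 := by ring
      rw [e1] at hq
      have : Q.D ((n : ZMod m)) = S.D (((n - k : ℤ) : ZMod m)) := by
        rw [← hq, ← hs]; ring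
      rw [hni] at this
      rw [this]
      simp only [shiftVec]
      congr 1
      push_cast
      rw [hni]
      ring
    · right
      funext i
      set n : ℤ := (i.val : ℤ) with hn
      have hni : ((n : ZMod m)) = i := by
        simp [hn, ZMod.natCast_val, ZMod.cast_id]
      have hq := Q.enum_gap n
      rw [hQf (n+1), hQf n] at hq
      simp only [hfS, h1, if_neg (by norm_num : (-1:ℝ) ≠ 1)] at hq
      have hs := S.enum_gap (k - n - 1)
      have e1 : (k - n - 1) + 1 = -(n - k) := by ring
      have e2 : -(n + 1 - k) = k - n - 1 := by ring
      rw [e1] at hs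
      rw [e2] at hq
      have : Q.D ((n : ZMod m)) = S.D (((k - n - 1 : ℤ) : ZMod m)) := by
        rw [← hq, ← hs]; ring
      rw [hni] at this
      rw [this]
      simp only [shiftVec, revVec]
      congr 1
      push_cast
      rw [hni]
      ring
  · rintro ⟨s, h | h⟩
    · -- translation
      set k : ℤ := (s.val : ℤ) with hk
      have hks : ((k : ZMod m)) = s := by simp [hk, ZMod.natCast_val, ZMod.cast_id]
      set c : ℝ := Q.enum 0 - S.enum k with hc
      have key : ∀ n : ℤ, Q.enum n = S.enum (n + k) + c := by
        apply eq_of_gap_eq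
        · simp [hc]
        · intro n
          have hq := Q.enum_gap n
          have hs' := S.enum_gap (n + k)
          have e1 : n + 1 + k = (n + k) + 1 := by ring
          rw [hq, e1, show S.enum (n + k + 1) + c - (S.enum (n + k) + c)
              = S.enum (n + k + 1) - S.enum (n + k) by ring, hs', h]
          simp only [shiftVec]
          congr 1
          push_cast
          rw [hks]
      refine ⟨c, 1, Or.inl rfl, ?_⟩
      rw [← Q.range_enum, ← S.range_enum]
      ext x
      constructor
      · rintro ⟨n, rfl⟩
        exact ⟨S.enum (n + k), ⟨n + k, rfl⟩, by rw [key n]; ring⟩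
      · rintro ⟨y, ⟨n, rfl⟩, rfl⟩
        exact ⟨n - k, by rw [key (n - k)]; simp [show n - k + k = n by ring]⟩
    · -- reflection
      set k : ℤ := (s.val : ℤ) with hk
      have hks : ((k : ZMod m)) = s := by simp [hk, ZMod.natCast_val, ZMod.cast_id]
      set c : ℝ := Q.enum 0 + S.enum (-k) with hc
      have key : ∀ n : ℤ, Q.enum n = -S.enum (-k - n) + c := by
        apply eq_of_gap_eq
        · simp [hc]
        · intro n
          have hq := Q.enum_gap n
          have hs' := S.enum_gap (-k - n - 1)
          have e1 : (-k - n - 1) + 1 = -k - n := by ring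
          rw [e1] at hs'
          have e2 : -k - (n + 1) = -k - n - 1 := by ring
          rw [hq, e2, show -S.enum (-k - n - 1) + c - (-S.enum (-k - n) + c)
              = S.enum (-k - n) - S.enum (-k - n - 1) by ring, hs', h]
          simp only [shiftVec, revVec]
          congr 1
          push_cast
          rw [hks]
          ring
      refine ⟨c, -1, Or.inr rfl, ?_⟩
      rw [← Q.range_enum, ← S.range_enum]
      ext x
      constructor
      · rintro ⟨n, rfl⟩
        exact ⟨S.enum (-k - n), ⟨-k - n, rfl⟩, by rw [key n]; ring⟩
      · rintro ⟨y, ⟨n, rfl⟩, rfl⟩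
        refine ⟨-k - n, ?_⟩
        rw [key (-k - n)]
        simp [show -k - (-k - n) = n by ring]
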